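/- Let R be a region and Z a zone, with canonical distance graphs having edge weights R_{xy} and Z_{xy} respectively. Then the intersection R ∩ Z is empty if and only if there exist vertices x, y (in X∪{x₀}) such that Z_{yx} + R_{xy} ≤ (<,0). -/

import Mathlib

attribute [local instance] Classical.propDecidable

noncomputable section

namespace TAform

/-! ### Weights `(≼, c)` with `c ∈ ℤ ∪ {∞}` -/

/-- Values in `ℤ ∪ {∞}`: `none` represents `∞`. -/
abbrev OVal := Option ℤ

/-- Addition on `ℤ ∪ {∞}`. -/
def ovAdd : OVal → OVal → OVal
  | some a, some b => some (a + b)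
  | _, _ => none

/-- Strict order on `ℤ ∪ {∞}`. -/
def ovLt : OVal → OVal → Prop
  | some a, some b => a < b
  | some _, none => True
  | none, _ => False

/-- A weight `(≼, c)`: `strict = true` means `≼` is `<`, `strict = false` means `≤`;
`val ∈ ℤ ∪ {∞}`. -/
structure Weight where
  strict : Bool
  val : OVal

/-- The weight `(<, ∞)`. -/
def winf : Weight := ⟨true, none⟩

/-- The weight `(≤, c)`. -/
def wle (c : ℤ) : Weight := ⟨false, some c⟩

/-- The weight `(<, c)`. -/
def wlt (c : ℤ) : Weight := ⟨true, some c⟩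

/-- Addition: `(≼₁,c₁)+(≼₂,c₂) = (≼,c₁+c₂)` where `≼` is `<` iff `≼₁` or `≼₂` is `<`. -/
def Weight.add (a b : Weight) : Weight := ⟨a.strict || b.strict, ovAdd a.val b.val⟩

/-- Order: `(≼₁,c₁) < (≼₂,c₂)` iff `c₁ < c₂`, or `c₁ = c₂`, `≼₁` is `<` and `≼₂` is `≤`. -/
def Weight.lt (a b : Weight) : Prop :=
  ovLt a.val b.val ∨ (a.val = b.val ∧ a.strict = true ∧ b.strict = false)

def Weight.le (a b : Weight) : Prop := Weight.lt a b ∨ a = b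

/-- Minus: `−(≼,c) = (≼,−c)`. -/
def Weight.neg (w : Weight) : Weight := ⟨w.strict, Option.map (fun c => -c) w.val⟩

/-- Floor: `⌊(<,c)⌋ = (≤,c−1)` and `⌊(≤,c)⌋ = (≤,c)`. -/
def Weight.floor (w : Weight) : Weight :=
  ⟨false, if w.strict then Option.map (fun c => c - 1) w.val else w.val⟩

/-- Ceiling (on integer-valued weights): `⌈(≤,c)⌉ = (≤,c)` and `⌈(<,c)⌉ = (<,c+1)`. -/
def Weight.ceil (w : Weight) : Weight :=
  if w.strict then ⟨true, Option.map (fun c => c + 1) w.val⟩ else w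

/-- Maximum of two weights. -/
def Weight.max (a b : Weight) : Weight := if Weight.lt a b then b else a

/-- Satisfaction: `d ≼ c` for a real number `d` and a weight `(≼,c)`. -/
def Weight.sat (w : Weight) (d : ℝ) : Prop :=
  match w.val with
  | none => True
  | some c => if w.strict then d < (c : ℝ) else d ≤ (c : ℝ)

/-! ### Distance graphs and their semantics -/

/-- Vertices: clocks of `X` together with the special vertex `x₀` (represented by `none`). -/
abbrev Vtx (X : Type*) := Option X

/-- A distance graph: a weight for every ordered pair of vertices.  The edge
`a →^{≼ c} b` represents the constraint `v b − v a ≼ c`. -/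
abbrev DGraph (X : Type*) := Vtx X → Vtx X → Weight

/-- A clock valuation. -/
abbrev Val (X : Type*) := X → ℝ

/-- The valuation is nonnegative (clock valuations map into `ℝ≥0`). -/
def Nonneg {X : Type*} (v : Val X) : Prop := ∀ x, 0 ≤ v x

/-- Extension of a valuation to all vertices, sending `x₀` to `0`. -/
def extV {X : Type*} (v : Val X) : Vtx X → ℝ
  | none => 0
  | some x => v x

/-- Semantics of a distance graph: the set of nonnegative clock valuations
(with `x₀ = 0`) satisfying all edge constraints. -/
def sem {X : Type*} (G : DGraph X) : Set (Val X) :=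
  { v | Nonneg v ∧ ∀ a b, (G a b).sat (extV v b - extV v a) }

/-- Weight of the path `a :: l ++ [b]` in `G` (sum of the weights of its edges). -/
def pathWeight {X : Type*} (G : DGraph X) : Vtx X → List (Vtx X) → Vtx X → Weight
  | a, [], b => G a b
  | a, c :: l, b => (G a c).add (pathWeight G c l b)

/-- `G` has only positive cycles: no cycle has weight at most `(<,0)`. -/
def OnlyPositiveCycles {X : Type*} (G : DGraph X) : Prop :=
  ∀ (a : Vtx X) (l : List (Vtx X)), ¬ (pathWeight G a l a).le (wlt 0)

/-- Canonical form: the weight of the edge from `a` to `b` is a lower bound of the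
weights of all paths from `a` to `b`. -/
def PathCanonical {X : Type*} (G : DGraph X) : Prop :=
  ∀ (a b : Vtx X) (l : List (Vtx X)), (G a b).le (pathWeight G a l b)

/-- The weight `w` bounds the difference `v b − v a` over all `v ∈ S`. -/
def Bounds {X : Type*} (S : Set (Val X)) (a b : Vtx X) (w : Weight) : Prop :=
  ∀ v ∈ S, w.sat (extV v b - extV v a)

/-- `G` is the canonical distance graph of the set `S`: it represents `S` and each of
its edge weights is the least weight bounding the corresponding difference over `S`
(equivalently, for sets defined by clock constraints, the lower bound of the weights
of paths between its endpoints). -/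
def IsCanonGraph {X : Type*} (G : DGraph X) (S : Set (Val X)) : Prop :=
  sem G = S ∧ ∀ a b w, Bounds S a b w → (G a b).le w

/-- A zone: a set of valuations defined by a conjunction of constraints of the form
`x − y # c` or `x # c`, i.e. the set represented by some distance graph. -/
def IsZone {X : Type*} (Z : Set (Val X)) : Prop := ∃ G : DGraph X, sem G = Z

/-! ### Regions and closure -/

/-- Region equivalence with respect to the bound function `α`: same integer parts
(or both above the bound), same set of clocks with zero fractional part, and the
same ordering of fractional parts of bounded clocks. -/
def regEq {X : Type*} (α : X → ℕ) (v w : Val X) : Prop :=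
  (∀ x, ((α x : ℝ) < v x ∧ (α x : ℝ) < w x) ∨
    (⌊v x⌋ = ⌊w x⌋ ∧ (Int.fract (v x) = 0 ↔ Int.fract (w x) = 0))) ∧
  (∀ x y, v x ≤ (α x : ℝ) → v y ≤ (α y : ℝ) →
    (Int.fract (v x) ≤ Int.fract (v y) ↔ Int.fract (w x) ≤ Int.fract (w y)))

/-- A region with respect to `α`: an equivalence class of region equivalence
(inside the nonnegative valuations). -/
def IsRegion {X : Type*} (α : X → ℕ) (R : Set (Val X)) : Prop :=
  ∃ v : Val X, Nonneg v ∧ R = { w | Nonneg w ∧ regEq α v w }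

/-- Closure abstraction: the union of the regions (w.r.t. `α`) intersecting `S`. -/
def Closure {X : Type*} (α : X → ℕ) (S : Set (Val X)) : Set (Val X) :=
  ⋃₀ { R | IsRegion α R ∧ (R ∩ S).Nonempty }

/-! ### LU-bounds and the `Extra⁺_LU` extrapolation -/

/-- `w > (≤, l)` where `l ∈ ℕ ∪ {−∞}` (`⊥` is `−∞`). -/
def gtLB (w : Weight) (l : WithBot ℕ) : Prop :=
  ∀ n : ℕ, l = (n : WithBot ℕ) → ovLt (some (n : ℤ)) w.val

/-- `−w > (≤, l)` where `l ∈ ℕ ∪ {−∞}`. -/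
def negGtLB (w : Weight) (l : WithBot ℕ) : Prop :=
  ∃ c : ℤ, w.val = some c ∧ ∀ n : ℕ, l = (n : WithBot ℕ) → c < -(n : ℤ)

/-- The weight `(<, −u)` for `u ∈ ℕ ∪ {−∞}` (with `(<,∞)` when `u = −∞`). -/
def wltNeg (u : WithBot ℕ) : Weight :=
  ⟨true, WithBot.recBotCoe none (fun n => some (-(n : ℤ))) u⟩

/-- The `Extra⁺_{LU}` extrapolation, applied edgewise to a distance graph `G`
(the canonical graph of a zone): `Z⁺_{xy} = (<,∞)` if `Z_{xy} > (≤,L_y)`, or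
`−Z_{y0} > (≤,L_y)`, or `−Z_{x0} > (≤,U_x)` and `y ≠ x₀`;
`Z⁺_{x0} = (<,−U_x)` if `−Z_{x0} > (≤,U_x)`; and `Z⁺_{xy} = Z_{xy}` otherwise. -/
def extraLU {X : Type*} (L U : X → WithBot ℕ) (G : DGraph X) : DGraph X := fun a b =>
  match a, b with
  | some x, some y =>
      if gtLB (G (some x) (some y)) (L y) ∨ negGtLB (G (some y) none) (L y) ∨
          negGtLB (G (some x) none) (U x)
      then winf else G (some x) (some y)
  | none, some y =>
      if gtLB (G none (some y)) (L y) ∨ negGtLB (G (some y) none) (L y)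
      then winf else G none (some y)
  | some x, none =>
      if negGtLB (G (some x) none) (U x) then wltNeg (U x) else G (some x) none
  | none, none => G none none

/-! ### LU-preorder and its abstraction -/

/-- `l < r` where `l ∈ ℕ ∪ {−∞}` and `r : ℝ`. -/
def lbLtR (l : WithBot ℕ) (r : ℝ) : Prop := ∀ n : ℕ, l = (n : WithBot ℕ) → (n : ℝ) < r

/-- The LU-preorder `ν' ≼_{LU} ν`: for each clock `x`, either `ν' x = ν x`,
or `L x < ν' x < ν x`, or `U x < ν x < ν' x`. -/
def LUpre {X : Type*} (L U : X → WithBot ℕ) (ν' ν : Val X) : Prop :=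
  ∀ x, ν' x = ν x ∨ (lbLtR (L x) (ν' x) ∧ ν' x < ν x) ∨ (lbLtR (U x) (ν x) ∧ ν x < ν' x)

/-- The abstraction `a_{≼LU}(W) = { ν | ∃ ν' ∈ W, ν' ≼_{LU} ν }` (inside the
nonnegative valuations). -/
def aLU {X : Type*} (L U : X → WithBot ℕ) (W : Set (Val X)) : Set (Val X) :=
  { ν | Nonneg ν ∧ ∃ ν' ∈ W, LUpre L U ν' ν }

/-! ### Guards, transitions, timed automata -/

/-- Comparison operators `# ∈ {<, ≤, =, ≥, >}`. -/
inductive Cmp | lt | le | eq | ge | gt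
deriving DecidableEq

/-- Satisfaction of a comparison by real numbers. -/
def Cmp.sat : Cmp → ℝ → ℝ → Prop
  | .lt, a, b => a < b
  | .le, a, b => a ≤ b
  | .eq, a, b => a = b
  | .ge, a, b => a ≥ b
  | .gt, a, b => a > b

/-- A clock constraint (guard): a conjunction (list) of constraints `x # c`, `c ∈ ℕ`. -/
abbrev Guard (X : Type*) := List (X × Cmp × ℕ)

/-- `v ⊨ g`: every conjunct of the guard holds. -/
def gsat {X : Type*} (v : Val X) (g : Guard X) : Prop :=
  ∀ p ∈ g, Cmp.sat p.2.1 (v p.1) (p.2.2 : ℝ)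

/-- `[R]v`: reset the clocks in `R` to `0`, leaving the others unchanged. -/
def resetVal {X : Type*} (R : Set X) (v : Val X) : Val X := Set.indicator Rᶜ v

/-- One step `ν →^{δ,t} ν'` for a transition with guard `g` and reset set `R`:
`ν + δ ⊨ g` and `ν' = [R](ν + δ)`. -/
def step {X : Type*} (g : Guard X) (R : Set X) (δ : ℝ) (ν ν' : Val X) : Prop :=
  0 ≤ δ ∧ gsat (fun x => ν x + δ) g ∧ ν' = resetVal R (fun x => ν x + δ)

/-- `Post(S,t)`: all valuations reachable by the transition from valuations in `S`. -/
def Post {X : Type*} (g : Guard X) (R : Set X) (S : Set (Val X)) : Set (Val X) :=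
  { ν' | ∃ ν ∈ S, ∃ δ : ℝ, step g R δ ν ν' }

/-- A timed automaton `(Q, q₀, X, T, Acc)`. -/
structure TimedAuto (Q X : Type*) where
  init : Q
  trans : Set (Q × Guard X × Set X × Q)
  acc : Set Q

/-- `(q,ν) →^{δ,t} (q',ν')` for a transition `t = (q,g,R,q')` of the automaton. -/
def TimedAuto.cstep {Q X : Type*} (A : TimedAuto Q X) (t : Q × Guard X × Set X × Q)
    (δ : ℝ) (c c' : Q × Val X) : Prop :=
  t ∈ A.trans ∧ c.1 = t.1 ∧ c'.1 = t.2.2.2 ∧ step t.2.1 t.2.2.1 δ c.2 c'.2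

/-! ### Auxiliary: real-valued weights -/

/-- Real-valued weights: `none` = `∞`; `some (c, p)` where `p = true` means `≤ c`
and `p = false` means `< c`. -/
abbrev RW := Option (ℝ × Bool)

def rwlt0 : RW := some (0, false)

def radd : RW → RW → RW
  | some (c, p), some (d, q) => some (c + d, p && q)
  | _, _ => none

def rsat : RW → ℝ → Prop
  | none, _ => True
  | some (c, p), d => if p then d ≤ c else d < c

def rle : RW → RW → Prop
  | _, none => True
  | none, some _ => False
  | some (c, p), some (d, q) => c < d ∨ (c = d ∧ (p = true → q = true))

theorem rle_refl (u : RW) : rle u u := by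
  rcases u with _ | ⟨c, p⟩ <;> simp [rle]

theorem rle_trans {u v w : RW} (h1 : rle u v) (h2 : rle v w) : rle u w := by
  rcases u with _ | ⟨c, p⟩ <;> rcases v with _ | ⟨d, q⟩ <;> rcases w with _ | ⟨e, r⟩ <;>
    simp_all [rle]
  rcases h1 with h1 | h1 <;> rcases h2 with h2 | h2
  · exact Or.inl (h1.trans h2)
  · exact Or.inl (h2.1 ▸ h1)
  · exact Or.inl (h1.1 ▸ h2)
  · exact Or.inr ⟨h1.1.trans h2.1, fun hp => h2.2 (h1.2 hp)⟩

theorem rle_none (v : RW) : rle v none := by cases v <;> trivial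

theorem rle_total (u v : RW) : rle u v ∨ rle v u := by
  rcases u with _ | ⟨c, p⟩
  · exact Or.inr (rle_none _)
  rcases v with _ | ⟨d, q⟩
  · exact Or.inl (rle_none _)
  rcases lt_trichotomy c d with h | h | h
  · exact Or.inl (Or.inl h)
  · subst h
    cases p
    · exact Or.inl (Or.inr ⟨rfl, by simp⟩)
    · exact Or.inr (Or.inr ⟨rfl, by simp⟩)
  · exact Or.inr (Or.inl h)

theorem rsat_mono {u v : RW} {d : ℝ} (h : rle u v) (hs : rsat u d) : rsat v d := by
  rcases u with _ | ⟨c, p⟩ <;> rcases v with _ | ⟨e, q⟩ <;> simp_all [rle, rsat]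
  rcases h with h | ⟨rfl, hpq⟩
  · rcases Bool.eq_false_or_eq_true q with hq | hq <;> rcases Bool.eq_false_or_eq_true p with hp | hp <;>
      simp_all <;> linarith
  · rcases Bool.eq_false_or_eq_true q with hq | hq <;> rcases Bool.eq_false_or_eq_true p with hp | hp <;>
      simp_all <;> linarith

theorem rsat_anti {w : RW} {d d' : ℝ} (h : d' ≤ d) (hs : rsat w d) : rsat w d' := by
  rcases w with _ | ⟨c, p⟩ <;> simp_all [rsat]
  rcases Bool.eq_false_or_eq_true p with hp | hp <;> simp_all <;> linarith

theorem rsat_radd {u v : RW} {d e : ℝ} (hu : rsat u d) (hv : rsat v e) :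
    rsat (radd u v) (d + e) := by
  rcases u with _ | ⟨c, p⟩ <;> rcases v with _ | ⟨c', q⟩ <;> simp_all [rsat, radd]
  rcases Bool.eq_false_or_eq_true p with hp | hp <;> rcases Bool.eq_false_or_eq_true q with hq | hq <;>
    simp_all <;> linarith

theorem radd_assoc (u v w : RW) : radd (radd u v) w = radd u (radd v w) := by
  rcases u with _ | ⟨c, p⟩ <;> rcases v with _ | ⟨d, q⟩ <;> rcases w with _ | ⟨e, r⟩ <;>
    simp [radd, add_assoc, Bool.and_assoc]

theorem radd_comm (u v : RW) : radd u v = radd v u := by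
  rcases u with _ | ⟨c, p⟩ <;> rcases v with _ | ⟨d, q⟩ <;>
    simp [radd, add_comm, Bool.and_comm]

theorem radd_mono_right {u u' : RW} (w : RW) (h : rle u u') : rle (radd w u) (radd w u') := by
  rcases u with _ | ⟨c, p⟩ <;> rcases u' with _ | ⟨c', p'⟩ <;> rcases w with _ | ⟨e, r⟩ <;>
    simp_all [rle, radd]
  rcases h with h | ⟨rfl, hpq⟩
  · exact Or.inl (by linarith)
  · exact Or.inr ⟨rfl, by rcases Bool.eq_false_or_eq_true r with hr | hr <;> simp_all⟩

theorem radd_mono_left {u u' : RW} (w : RW) (h : rle u u') : rle (radd u w) (radd u' w) := by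
  rw [radd_comm u w, radd_comm u' w]; exact radd_mono_right w h

theorem pos_of_rsat_zero {w : RW} (h : rsat w 0) : ¬ rle w rwlt0 := by
  intro hle
  have := rsat_mono hle h
  simp [rsat, rwlt0] at this

theorem rsat_zero_of_pos {w : RW} (h : ¬ rle w rwlt0) : rsat w 0 := by
  rcases w with _ | ⟨c, p⟩
  · trivial
  cases p
  · simp only [rle, rwlt0] at h
    push_neg at h
    simp only [rsat, if_neg (by simp : ¬ (false = true))]
    rcases h with ⟨h1, h2⟩
    have hne : c ≠ 0 := fun hc => by simpa using (h2 hc).1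
    exact lt_of_le_of_ne h1 (Ne.symm hne)
  · simp only [rle, rwlt0] at h
    simp only [rsat, if_pos rfl]
    by_contra hb
    exact h (Or.inl (by linarith [not_le.mp hb]))

/-- Shift lemma: if `w + (r, fl)` is positive then `(Δ, ≤) ≤ w + (r + Δ, fl)`. -/
theorem rle_shift {w : RW} {r : ℝ} {fl : Bool} (h : ¬ rle (radd w (some (r, fl))) rwlt0)
    (Δ : ℝ) : rle (some (Δ, true)) (radd w (some (r + Δ, fl))) := by
  rcases w with _ | ⟨c, p⟩
  · exact rle_none _
  · show rle (some (Δ, true)) (some (c + (r + Δ), p && fl))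
    have h1 : ¬ (c + r < 0) := fun hc => h (Or.inl hc)
    rcases lt_or_ge 0 (c + r) with h' | h'
    · exact Or.inl (by linarith)
    · have hcr : c + r = 0 := le_antisymm h' (not_lt.mp h1)
      have hfl : (p && fl) = true := by
        by_contra hb
        exact h (Or.inr ⟨hcr, fun hh => absurd hh hb⟩)
      exact Or.inr ⟨by linarith, fun _ => hfl⟩

def rmin (u v : RW) : RW := if rle u v then u else v

theorem rmin_le_left (u v : RW) : rle (rmin u v) u := by
  unfold rmin; split
  · exact rle_refl u
  · next h => rcases rle_total u v with h' | h'; exact absurd h' h; exact h'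

theorem rmin_le_right (u v : RW) : rle (rmin u v) v := by
  unfold rmin; split
  · next h => exact h
  · exact rle_refl v

theorem rmin_eq_or (u v : RW) : rmin u v = u ∨ rmin u v = v := by
  unfold rmin; split; exact Or.inl rfl; exact Or.inr rfl

theorem rsat_some_true {c d : ℝ} (h : rsat (some (c, true)) d) : d ≤ c := by
  simpa [rsat] using h

theorem rsat_some_false {c d : ℝ} (h : rsat (some (c, false)) d) : d < c := by
  simpa [rsat] using h


/-! ### Fold-min over lists -/

def rminList (w : RW) (l : List RW) : RW := l.foldl rmin w

theorem rminList_le_init (w : RW) (l : List RW) : rle (rminList w l) w := by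
  induction l generalizing w with
  | nil => exact rle_refl w
  | cons a l ih =>
    have : rminList w (a :: l) = rminList (rmin w a) l := by simp [rminList]
    rw [this]
    exact rle_trans (ih (rmin w a)) (rmin_le_left w a)

theorem rminList_le_mem : ∀ (l : List RW) (w a : RW), a ∈ l → rle (rminList w l) a := by
  intro l
  induction l with
  | nil => intro w a ha; cases ha
  | cons b l ih =>
    intro w a ha
    have he : rminList w (b :: l) = rminList (rmin w b) l := by simp [rminList]
    rw [he]
    rcases List.mem_cons.mp ha with rfl | ha'
    · exact rle_trans (rminList_le_init _ _) (rmin_le_right w a)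
    · exact ih (rmin w b) a ha'

theorem rminList_attained (w : RW) (l : List RW) : rminList w l = w ∨ rminList w l ∈ l := by
  induction l generalizing w with
  | nil => exact Or.inl rfl
  | cons a l ih =>
    have he : rminList w (a :: l) = rminList (rmin w a) l := by simp [rminList]
    rw [he]
    rcases ih (rmin w a) with h | h
    · rcases rmin_eq_or w a with h' | h'
      · exact Or.inl (h.trans h')
      · exact Or.inr (by rw [h, h']; exact List.mem_cons_self)
    · exact Or.inr (List.mem_cons_of_mem a h)

/-! ### Minimal element of a finite totally-ordered-by-inclusion family -/

theorem chain_min {ι : Type*} (F : ι → Set ℝ) (htot : ∀ i j, F i ⊆ F j ∨ F j ⊆ F i)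
    (s : Finset ι) (hs : s.Nonempty) : ∃ i ∈ s, ∀ j ∈ s, F i ⊆ F j := by
  induction s using Finset.induction with
  | empty => simp at hs
  | @insert a s hnotmem ih =>
    rcases s.eq_empty_or_nonempty with rfl | hs'
    · exact ⟨a, by simp, by simp⟩
    · rcases ih hs' with ⟨i, hi, hmin⟩
      rcases htot a i with h | h
      · refine ⟨a, Finset.mem_insert_self a s, fun j hj => ?_⟩
        rcases Finset.mem_insert.mp hj with rfl | hj
        · exact subset_rfl
        · exact h.trans (hmin j hj)
      · refine ⟨i, Finset.mem_insert_of_mem hi, fun j hj => ?_⟩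
        rcases Finset.mem_insert.mp hj with rfl | hj
        · exact h
        · exact hmin j hj

/-! ### Splitting a two-edge constraint -/

theorem rsat_split {w1 w2 : RW} {d1 d2 : ℝ} (h : rsat (radd w2 w1) (d1 - d2)) :
    ∃ t, rsat w1 (d1 - t) ∧ rsat w2 (t - d2) := by
  rcases w1 with _ | ⟨c1, p1⟩
  · rcases w2 with _ | ⟨c2, p2⟩
    · exact ⟨0, trivial, trivial⟩
    · refine ⟨d2 + c2 - 1, trivial, ?_⟩
      cases p2 <;> simp [rsat] <;> linarith
  · rcases w2 with _ | ⟨c2, p2⟩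
    · cases p1
      · refine ⟨d1 - c1 + 1, ?_, trivial⟩
        simp [rsat]; linarith
      · refine ⟨d1 - c1, ?_, trivial⟩
        simp [rsat]
    · cases p1
      · -- w1 strict
        have h' : d1 - d2 < c2 + c1 := by
          have : rsat (some (c2 + c1, p2 && false)) (d1 - d2) := h
          simpa [rsat] using this
        refine ⟨((d1 - c1) + (d2 + c2)) / 2, ?_, ?_⟩
        · simp [rsat]; linarith
        · cases p2 <;> simp [rsat] <;> linarith
      · -- w1 nonstrict
        refine ⟨d1 - c1, by simp [rsat], ?_⟩
        have h' : rsat (some (c2 + c1, p2 && true)) (d1 - d2) := h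
        cases p2 <;> simp [rsat] at h' ⊢ <;> linarith

/-! ### Feasibility of a transitively-closed positive system -/

theorem feasAux : ∀ (n : ℕ) (V : Type u) [Fintype V] (v₀ : V) (B : V → V → RW),
    Fintype.card V = n →
    (∀ a c b, rle (B a b) (radd (B a c) (B c b))) →
    (∀ a, ¬ rle (B a a) rwlt0) →
    ∃ f : V → ℝ, f v₀ = 0 ∧ ∀ a b, rsat (B a b) (f b - f a) := by
  intro n
  induction n with
  | zero =>
    intro V _ v₀ B hcard _ _
    have : Fintype.card V ≠ 0 := @Fintype.card_ne_zero V _ ⟨v₀⟩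
    exact absurd hcard this
  | succ n ih =>
    intro V _ v₀ B hcard hT hD
    by_cases hone : ∀ a : V, a = v₀
    · refine ⟨fun _ => 0, rfl, fun a b => ?_⟩
      rw [hone a, hone b]
      simpa using rsat_zero_of_pos (hD v₀)
    · push_neg at hone
      obtain ⟨z, hz⟩ := hone
      have hvz : v₀ ≠ z := fun h => hz h.symm
      let V' := {a : V // a ≠ z}
      have hcard' : Fintype.card V' = n := by
        have h2 : Fintype.card {a : V // ¬ a = z} = Fintype.card V - Fintype.card {a : V // a = z} :=
          Fintype.card_subtype_compl _
        have h1 : Fintype.card {a : V // a = z} = 1 := Fintype.card_subtype_eq z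
        have : Fintype.card V' = Fintype.card V - 1 := by
          rw [← h1]; exact h2
        omega
      obtain ⟨f', hf0, hfsat⟩ := ih V' ⟨v₀, hvz⟩ (fun a b => B a b) hcard'
        (fun a c b => hT a c b) (fun a => hD a)
      let Lo : V' → Set ℝ := fun a => {t | rsat (B z a) (f' a - t)}
      let Hi : V' → Set ℝ := fun b => {t | rsat (B b z) (t - f' b)}
      have hLoUp : ∀ a, IsUpperSet (Lo a) := by
        intro a t t' htt' ht
        exact rsat_anti (by linarith : f' a - t' ≤ f' a - t) ht
      have hHiLow : ∀ b, IsLowerSet (Hi b) := by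
        intro b t t' htt' ht
        exact rsat_anti (by linarith : t' - f' b ≤ t - f' b) ht
      have hpair : ∀ a b : V', (Lo a ∩ Hi b).Nonempty := by
        intro a b
        have h1 : rsat (B (b : V) (a : V)) (f' a - f' b) := hfsat b a
        have h2 : rsat (radd (B (b : V) z) (B z (a : V))) (f' a - f' b) :=
          rsat_mono (hT (b : V) z (a : V)) h1
        obtain ⟨t, ht1, ht2⟩ := rsat_split h2
        exact ⟨t, ht1, ht2⟩
      have hne : (Finset.univ : Finset V').Nonempty := ⟨⟨v₀, hvz⟩, Finset.mem_univ _⟩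
      obtain ⟨astar, -, hamin⟩ :=
        chain_min Lo (fun i j => (hLoUp i).total (hLoUp j)) Finset.univ hne
      obtain ⟨bstar, -, hbmin⟩ :=
        chain_min Hi (fun i j => (hHiLow i).total (hHiLow j)) Finset.univ hne
      obtain ⟨t, htlo, hthi⟩ := hpair astar bstar
      have htLo : ∀ a : V', t ∈ Lo a := fun a => hamin a (Finset.mem_univ a) htlo
      have htHi : ∀ b : V', t ∈ Hi b := fun b => hbmin b (Finset.mem_univ b) hthi
      set f : V → ℝ := fun a => if h : a = z then t else f' ⟨a, h⟩ with hfdef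
      have hfne : ∀ (a : V) (h : a ≠ z), f a = f' ⟨a, h⟩ := by
        intro a h; simp only [hfdef]; rw [dif_neg h]
      have hfz : f z = t := by simp only [hfdef]; simp
      refine ⟨f, ?_, ?_⟩
      · rw [hfne v₀ hvz]; exact hf0
      · intro a b
        by_cases hb : b = z <;> by_cases ha : a = z
        · rw [ha, hb, hfz]
          simpa using rsat_zero_of_pos (hD z)
        · rw [hb, hfz, hfne a ha]
          exact htHi ⟨a, ha⟩
        · rw [ha, hfz, hfne b hb]
          exact htLo ⟨b, hb⟩
        · rw [hfne a ha, hfne b hb]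
          exact hfsat ⟨a, ha⟩ ⟨b, hb⟩

theorem feas {V : Type u} [Fintype V] (v₀ : V) (B : V → V → RW)
    (hT : ∀ a c b, rle (B a b) (radd (B a c) (B c b)))
    (hD : ∀ a, ¬ rle (B a a) rwlt0) :
    ∃ f : V → ℝ, f v₀ = 0 ∧ ∀ a b, rsat (B a b) (f b - f a) :=
  feasAux (Fintype.card V) V v₀ B rfl hT hD


/-! ### Weight-level lemmas and transfer to `RW` -/

theorem wsat_add {w1 w2 : Weight} {d1 d2 : ℝ} (h1 : w1.sat d1) (h2 : w2.sat d2) :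
    (w1.add w2).sat (d1 + d2) := by
  rcases w1 with ⟨s1, _ | c1⟩ <;> rcases w2 with ⟨s2, _ | c2⟩ <;>
    simp_all [Weight.sat, Weight.add, ovAdd]
  cases s1 <;> cases s2 <;> simp_all <;> push_cast <;> linarith

theorem wle_wlt0_char {s : Bool} {v : OVal} (h : Weight.le ⟨s, v⟩ (wlt 0)) :
    ∃ c, v = some c ∧ (c < 0 ∨ (c = 0 ∧ s = true)) := by
  rcases v with _ | c
  · exfalso
    rcases h with h | h
    · rcases h with h | ⟨h, -⟩
      · exact h
      · simpa [wlt] using h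
    · have := congrArg Weight.val h
      simp [wlt] at this
  · refine ⟨c, rfl, ?_⟩
    rcases h with h | h
    · rcases h with h | ⟨hv, hs1, hs2⟩
      · exact Or.inl (by simpa [wlt, ovLt] using h)
      · simp [wlt] at hs2
    · have h1 : s = true := by have := congrArg Weight.strict h; simpa [wlt] using this
      have h2 : c = 0 := by have := congrArg Weight.val h; simpa [wlt] using this
      exact Or.inr ⟨h2, h1⟩

theorem wle_wlt0_intro {s : Bool} {c : ℤ} (h : c < 0 ∨ (c = 0 ∧ s = true)) :
    Weight.le ⟨s, some c⟩ (wlt 0) := by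
  rcases h with h | ⟨rfl, rfl⟩
  · exact Or.inl (Or.inl (by simpa [wlt, ovLt] using h))
  · exact Or.inr rfl

theorem ovAdd_eq_some {v1 v2 : OVal} {m : ℤ} (h : ovAdd v1 v2 = some m) :
    ∃ c1 c2, v1 = some c1 ∧ v2 = some c2 ∧ c1 + c2 = m := by
  rcases v1 with _ | c1 <;> rcases v2 with _ | c2 <;> simp [ovAdd] at h
  exact ⟨c1, c2, rfl, rfl, h⟩

theorem wle_some_char {s1 s2 : Bool} {v1 : OVal} {c2 : ℤ}
    (h : Weight.le ⟨s1, v1⟩ ⟨s2, some c2⟩) :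
    ∃ c1, v1 = some c1 ∧ (c1 < c2 ∨ (c1 = c2 ∧ (s2 = true → s1 = true))) := by
  rcases v1 with _ | c1
  · exfalso
    rcases h with h | h
    · rcases h with h | ⟨h, -⟩
      · exact h
      · simp at h
    · have := congrArg Weight.val h
      simp at this
  · refine ⟨c1, rfl, ?_⟩
    rcases h with h | h
    · rcases h with h | ⟨hv, hs1, hs2⟩
      · exact Or.inl (by simpa [ovLt] using h)
      · have : c1 = c2 := by simpa using hv
        exact Or.inr ⟨this, fun _ => hs1⟩
    · have h1 : s1 = s2 := by have := congrArg Weight.strict h; simpa using this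
      have h2 : c1 = c2 := by have := congrArg Weight.val h; simpa using this
      exact Or.inr ⟨h2, fun hs => h1.trans hs ▸ by rw [h1, hs]⟩

theorem wsat_wlt0_false {w : Weight} (hle : w.le (wlt 0)) (hsat : w.sat 0) : False := by
  rcases w with ⟨s, v⟩
  obtain ⟨c, rfl, hc⟩ := wle_wlt0_char hle
  rcases hc with h | ⟨rfl, rfl⟩
  · have hcr : (c : ℝ) < 0 := by exact_mod_cast h
    cases s <;> simp [Weight.sat] at hsat <;> first | omega | linarith
  · simp [Weight.sat] at hsat

/-- If `w ≤ w'` and `u + w' ≤ (<,0)` then `u + w ≤ (<,0)`. -/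
theorem wadd_le_wlt0 {u w w' : Weight} (hw : w.le w') (h : (u.add w').le (wlt 0)) :
    (u.add w).le (wlt 0) := by
  rcases u with ⟨s, v⟩; rcases w' with ⟨s2, v2⟩; rcases w with ⟨s1, v1⟩
  obtain ⟨m, hm, hc⟩ := wle_wlt0_char h
  obtain ⟨c, c2, rfl, rfl, hsum⟩ := ovAdd_eq_some hm
  obtain ⟨c1, rfl, hcc⟩ := wle_some_char hw
  show Weight.le ⟨s || s1, ovAdd (some c) (some c1)⟩ (wlt 0)
  have he : ovAdd (some c) (some c1) = some (c + c1) := rfl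
  rw [he]
  apply wle_wlt0_intro
  rcases hcc with h' | ⟨rfl, himp⟩
  · left; omega
  · rcases hc with h' | ⟨h', hb⟩
    · left; omega
    · right
      refine ⟨by omega, ?_⟩
      have hb' : (s || s2) = true := hb
      clear hb hm h
      cases s with
      | false =>
        simp only [Bool.false_or] at hb' ⊢
        exact himp hb'
      | true => simp

/-- Extracting positivity: if `(s,c) + (<,k)` is not `≤ (<,0)` then `1 ≤ c + k`. -/
theorem wadd_wlt_pos {s : Bool} {c k : ℤ}
    (h : ¬ (Weight.add ⟨s, some c⟩ (wlt k)).le (wlt 0)) : 1 ≤ c + k := by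
  by_contra hb
  push_neg at hb
  apply h
  show Weight.le ⟨s || true, ovAdd (some c) (some k)⟩ (wlt 0)
  have he : ovAdd (some c) (some k) = some (c + k) := rfl
  rw [he]
  apply wle_wlt0_intro
  rcases lt_or_ge (c + k) 0 with h' | h'
  · exact Or.inl h'
  · exact Or.inr ⟨by omega, by simp⟩

/-! ### Transfer from `Weight` to `RW` -/

def toRW (w : Weight) : RW := w.val.map (fun c => ((c : ℝ), !w.strict))

theorem rsat_toRW {w : Weight} {d : ℝ} : rsat (toRW w) d ↔ w.sat d := by
  rcases w with ⟨s, _ | c⟩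
  · simp [toRW, rsat, Weight.sat]
  · cases s <;> simp [toRW, rsat, Weight.sat]

theorem toRW_add (w1 w2 : Weight) : toRW (w1.add w2) = radd (toRW w1) (toRW w2) := by
  rcases w1 with ⟨s1, _ | c1⟩ <;> rcases w2 with ⟨s2, _ | c2⟩ <;>
    simp [toRW, radd, Weight.add, ovAdd, Bool.not_or]

theorem wle_to_rle {w1 w2 : Weight} (h : w1.le w2) : rle (toRW w1) (toRW w2) := by
  rcases h with h | rfl
  · rcases w1 with ⟨s1, v1⟩; rcases w2 with ⟨s2, v2⟩
    rcases h with h | ⟨hv, hs1, hs2⟩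
    · rcases v1 with _ | c1 <;> rcases v2 with _ | c2
      · exact absurd h (by simp [ovLt])
      · exact absurd h (by simp [ovLt])
      · exact rle_none _
      · exact Or.inl (by simp [toRW]; exact_mod_cast (by simpa [ovLt] using h))
    · simp only at hv
      subst hv
      subst hs1; subst hs2
      rcases v1 with _ | c1
      · exact rle_refl _
      · exact Or.inr ⟨rfl, by simp⟩
  · exact rle_refl _


/-! ### The shape matrix for the main construction -/

section Stmt1Aux

variable {X : Type*} [Fintype X]

/-- Ground vertices: `x₀` and the clocks bounded in the region of `v₀`. -/
def GroundV (α : X → ℕ) (v₀ : Val X) (a : Vtx X) : Prop :=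
  a.elim True (fun x => v₀ x ≤ (α x : ℝ))

/-- The tail-potential: value of `v₀` on ground vertices, `α` on unbounded clocks. -/
noncomputable def hV (α : X → ℕ) (v₀ : Val X) (a : Vtx X) : ℝ :=
  a.elim 0 (fun x => if v₀ x ≤ (α x : ℝ) then v₀ x else (α x : ℝ))

noncomputable def flagV (α : X → ℕ) (v₀ : Val X) (a : Vtx X) : Bool :=
  if GroundV α v₀ a then true else false

/-- The `E`-edges: exact region-based edges. -/
noncomputable def EwV (α : X → ℕ) (v₀ : Val X) (a b : Vtx X) : RW :=
  if GroundV α v₀ b then some (extV v₀ b - hV α v₀ a, flagV α v₀ a) else none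

noncomputable def ZwV (GZ : DGraph X) (a b : Vtx X) : RW := toRW (GZ a b)

noncomputable def shapeV (α : X → ℕ) (v₀ : Val X) (GZ : DGraph X) (a b : Vtx X)
    (p : Vtx X × Vtx X) : RW :=
  radd (ZwV GZ a p.1) (radd (EwV α v₀ p.1 p.2) (ZwV GZ p.2 b))

noncomputable def BV (α : X → ℕ) (v₀ : Val X) (GZ : DGraph X) (a b : Vtx X) : RW :=
  rminList (ZwV GZ a b)
    (((Finset.univ : Finset (Vtx X × Vtx X)).toList).map (shapeV α v₀ GZ a b))

theorem BV_le_Zw (α : X → ℕ) (v₀ : Val X) (GZ : DGraph X) (a b : Vtx X) :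
    rle (BV α v₀ GZ a b) (ZwV GZ a b) :=
  rminList_le_init _ _

theorem BV_le_shape (α : X → ℕ) (v₀ : Val X) (GZ : DGraph X) (a b : Vtx X)
    (p : Vtx X × Vtx X) : rle (BV α v₀ GZ a b) (shapeV α v₀ GZ a b p) := by
  apply rminList_le_mem
  exact List.mem_map_of_mem (Finset.mem_toList.mpr (Finset.mem_univ p))

theorem BV_att (α : X → ℕ) (v₀ : Val X) (GZ : DGraph X) (a b : Vtx X) :
    BV α v₀ GZ a b = ZwV GZ a b ∨ ∃ p, BV α v₀ GZ a b = shapeV α v₀ GZ a b p := by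
  rcases rminList_attained (ZwV GZ a b)
      (((Finset.univ : Finset (Vtx X × Vtx X)).toList).map (shapeV α v₀ GZ a b)) with h | h
  · exact Or.inl h
  · obtain ⟨p, -, hp⟩ := List.mem_map.mp h
    exact Or.inr ⟨p, hp.symm⟩

theorem radd_none_left (w : RW) : radd none w = none := by
  rcases w with _ | ⟨c, p⟩ <;> rfl

theorem radd_none_right (w : RW) : radd w none = none := by
  rcases w with _ | ⟨c, p⟩ <;> rfl

theorem radd_mono_both {w1 w1' w2 w2' : RW} (h1 : rle w1 w1') (h2 : rle w2 w2') :
    rle (radd w1 w2) (radd w1' w2') :=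
  rle_trans (radd_mono_left w2 h1) (radd_mono_right w1' h2)

end Stmt1Aux


/-! ### Zone lemmas -/

section ZoneAux

variable {X : Type*} [Fintype X] {Z : Set (Val X)} {GZ : DGraph X}

theorem wle_some_char' {w : Weight} {s2 : Bool} {c2 : ℤ} (h : w.le ⟨s2, some c2⟩) :
    ∃ c1, w.val = some c1 ∧ c1 ≤ c2 := by
  rcases w with ⟨s1, v1⟩
  obtain ⟨c1, h1, h2⟩ := wle_some_char h
  exact ⟨c1, h1, by omega⟩

theorem wadd_wlt_pos' {w : Weight} {c k : ℤ} (hv : w.val = some c)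
    (h : ¬ (w.add (wlt k)).le (wlt 0)) : 1 ≤ c + k := by
  rcases w with ⟨s, v⟩
  simp only at hv
  subst hv
  exact wadd_wlt_pos h

theorem zmem (hGZ : IsCanonGraph GZ Z) {v : Val X} (hv : v ∈ Z) :
    Nonneg v ∧ ∀ a b, (GZ a b).sat (extV v b - extV v a) := by
  rw [← hGZ.1] at hv
  exact hv

theorem zne (hGZ : IsCanonGraph GZ Z) : Z.Nonempty := by
  by_contra hze
  rw [Set.not_nonempty_iff_eq_empty] at hze
  have hb : ∀ w : Weight, Bounds Z none none w := by
    intro w v hv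
    rw [hze] at hv
    cases hv
  obtain ⟨c, hc, -⟩ := wle_some_char' (s2 := true) (c2 := 0) (hGZ.2 none none _ (hb (wlt 0)))
  obtain ⟨c', hc', hle⟩ :=
    wle_some_char' (s2 := true) (c2 := c - 1) (hGZ.2 none none _ (hb (wlt (c - 1))))
  rw [hc] at hc'
  have : c = c' := by injection hc'
  omega

theorem ztri (hGZ : IsCanonGraph GZ Z) (a c b : Vtx X) :
    (GZ a b).le ((GZ a c).add (GZ c b)) := by
  apply hGZ.2
  intro v hv
  have h1 := (zmem hGZ hv).2 a c
  have h2 := (zmem hGZ hv).2 c b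
  have h3 := wsat_add h1 h2
  have e : (extV v c - extV v a) + (extV v b - extV v c) = extV v b - extV v a := by ring
  rwa [e] at h3

theorem zdiag (hGZ : IsCanonGraph GZ Z) (a : Vtx X) : (GZ a a).le (wle 0) := by
  apply hGZ.2
  intro v hv
  rw [sub_self]
  simp [Weight.sat, wle]

theorem zdiag_pos (hGZ : IsCanonGraph GZ Z) (a : Vtx X) : ¬ rle (ZwV GZ a a) rwlt0 := by
  obtain ⟨w, hw⟩ := zne hGZ
  have h1 := (zmem hGZ hw).2 a a
  rw [sub_self] at h1
  exact pos_of_rsat_zero (rsat_toRW.mpr h1)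

theorem zxnone (hGZ : IsCanonGraph GZ Z) (x : X) : (GZ (some x) none).le (wle 0) := by
  apply hGZ.2
  intro v hv
  have hnn := (zmem hGZ hv).1
  have e : extV v none - extV v (some x) = -(v x) := by simp [extV]
  rw [e]
  simp only [Weight.sat, wle]
  have := hnn x
  simp
  linarith

theorem toRW_wle0 : toRW (wle 0) = some ((0 : ℝ), true) := by
  simp [toRW, wle]

end ZoneAux


/-! ### Region lemmas -/

section RegionAux

variable {X : Type*} (α : X → ℕ) (v₀ : Val X)

def RSetV : Set (Val X) := { w | Nonneg w ∧ regEq α v₀ w }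

def frV (w : Val X) (a : Vtx X) : ℝ := a.elim 0 (fun x => Int.fract (w x))

theorem frV_nonneg (w : Val X) (a : Vtx X) : 0 ≤ frV w a := by
  cases a
  · exact le_refl 0
  · exact Int.fract_nonneg _

theorem frV_lt_one (w : Val X) (a : Vtx X) : frV w a < 1 := by
  cases a
  · norm_num [frV]
  · exact Int.fract_lt_one _

theorem v₀_mem_RSetV (hnn : Nonneg v₀) : v₀ ∈ RSetV α v₀ :=
  ⟨hnn, ⟨fun _ => Or.inr ⟨rfl, Iff.rfl⟩, fun _ _ _ _ => Iff.rfl⟩⟩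

theorem reg_decomp {u : Val X} (hu : u ∈ RSetV α v₀) {a : Vtx X} (hga : GroundV α v₀ a) :
    ∃ N : ℤ, extV u a = N + frV u a ∧ extV v₀ a = N + frV v₀ a := by
  cases a with
  | none => exact ⟨0, by simp [extV, frV], by simp [extV, frV]⟩
  | some x =>
    rcases hu.2.1 x with ⟨h1, -⟩ | ⟨hfl, -⟩
    · exact absurd (show v₀ x ≤ (α x : ℝ) from hga) (not_le.mpr h1)
    · refine ⟨⌊v₀ x⌋, ?_, ?_⟩
      · show u x = (⌊v₀ x⌋ : ℝ) + Int.fract (u x)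
        rw [hfl]
        exact (Int.floor_add_fract (u x)).symm
      · show v₀ x = (⌊v₀ x⌋ : ℝ) + Int.fract (v₀ x)
        exact (Int.floor_add_fract (v₀ x)).symm

theorem reg_fr_zero {u : Val X} (hu : u ∈ RSetV α v₀) {x : X} (hx : v₀ x ≤ (α x : ℝ)) :
    Int.fract (v₀ x) = 0 ↔ Int.fract (u x) = 0 := by
  rcases hu.2.1 x with ⟨h1, -⟩ | ⟨-, hfr⟩
  · exact absurd hx (not_le.mpr h1)
  · exact hfr

theorem reg_fr_iff {u : Val X} (hu : u ∈ RSetV α v₀) {a b : Vtx X} (hga : GroundV α v₀ a)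
    (hgb : GroundV α v₀ b) : frV v₀ a ≤ frV v₀ b ↔ frV u a ≤ frV u b := by
  cases a with
  | none =>
    cases b with
    | none => exact iff_of_true (le_refl _) (le_refl _)
    | some y =>
      exact iff_of_true (frV_nonneg v₀ (some y)) (frV_nonneg u (some y))
  | some x =>
    cases b with
    | none =>
      have h1 := reg_fr_zero α v₀ hu (show v₀ x ≤ (α x : ℝ) from hga)
      show Int.fract (v₀ x) ≤ 0 ↔ Int.fract (u x) ≤ 0
      constructor
      · intro h
        exact le_of_eq (h1.mp (le_antisymm h (Int.fract_nonneg _)))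
      · intro h
        exact le_of_eq (h1.mpr (le_antisymm h (Int.fract_nonneg _)))
    | some y => exact hu.2.2 x y hga hgb

theorem reg_split {u : Val X} (hu : u ∈ RSetV α v₀) {a b : Vtx X} (hga : GroundV α v₀ a)
    (hgb : GroundV α v₀ b) :
    ∃ N : ℤ, ((extV u b - extV u a = N ∧ extV v₀ b - extV v₀ a = N) ∨
      ((N : ℝ) < extV u b - extV u a ∧ extV u b - extV u a < N + 1 ∧
       (N : ℝ) < extV v₀ b - extV v₀ a ∧ extV v₀ b - extV v₀ a < N + 1)) := by
  obtain ⟨Na, hua, hva⟩ := reg_decomp α v₀ hu hga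
  obtain ⟨Nb, hub, hvb⟩ := reg_decomp α v₀ hu hgb
  have hiff1 := reg_fr_iff α v₀ hu hga hgb
  have hiff2 := reg_fr_iff α v₀ hu hgb hga
  have hna := frV_nonneg v₀ a
  have hnb := frV_nonneg v₀ b
  have hla := frV_lt_one v₀ a
  have hlb := frV_lt_one v₀ b
  have hna' := frV_nonneg u a
  have hnb' := frV_nonneg u b
  have hla' := frV_lt_one u a
  have hlb' := frV_lt_one u b
  rcases lt_trichotomy (frV v₀ a) (frV v₀ b) with hlt | heq | hgt
  · refine ⟨Nb - Na, Or.inr ?_⟩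
    have h1 : frV u a < frV u b := by
      have hle := hiff1.mp (le_of_lt hlt)
      have hne : ¬ frV u b ≤ frV u a := fun hc => absurd (hiff2.mpr hc) (not_le.mpr hlt)
      exact lt_of_le_of_ne hle (fun he => hne (le_of_eq he.symm))
    rw [hua, hub, hva, hvb]
    push_cast
    refine ⟨by linarith, by linarith, by linarith, by linarith⟩
  · refine ⟨Nb - Na, Or.inl ?_⟩
    have h1 : frV u a = frV u b :=
      le_antisymm (hiff1.mp (le_of_eq heq)) (hiff2.mp (le_of_eq heq.symm))
    rw [hua, hub, hva, hvb]
    push_cast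
    constructor <;> linarith
  · refine ⟨Nb - Na - 1, Or.inr ?_⟩
    have h1 : frV u b < frV u a := by
      have hle := hiff2.mp (le_of_lt hgt)
      have hne : ¬ frV u a ≤ frV u b := fun hc => absurd (hiff1.mpr hc) (not_le.mpr hgt)
      exact lt_of_le_of_ne hle (fun he => hne (le_of_eq he.symm))
    rw [hua, hub, hva, hvb]
    push_cast
    refine ⟨by linarith, by linarith, by linarith, by linarith⟩

theorem reg_up {u : Val X} (hu : u ∈ RSetV α v₀) {x : X} (hx : (α x : ℝ) < v₀ x) :
    (α x : ℝ) < u x := by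
  rcases hu.2.1 x with ⟨-, h2⟩ | ⟨hfl, hfr⟩
  · exact h2
  · have h1 : (α x : ℤ) ≤ ⌊v₀ x⌋ := Int.le_floor.mpr (by exact_mod_cast le_of_lt hx)
    rcases lt_or_eq_of_le h1 with h1' | h1'
    · have h2' : ((α x : ℤ) : ℝ) + 1 ≤ (⌊v₀ x⌋ : ℝ) := by exact_mod_cast h1'
      have h3 : (⌊u x⌋ : ℝ) ≤ u x := Int.floor_le _
      rw [← hfl] at h3
      push_cast at h2' ⊢
      linarith
    · have hfloor : (⌊v₀ x⌋ : ℝ) = (α x : ℝ) := by exact_mod_cast h1'.symm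
      have hfv : 0 < Int.fract (v₀ x) := by
        rw [← Int.self_sub_floor]
        rw [hfloor]
        linarith
      have hfu : 0 < Int.fract (u x) := by
        rcases lt_or_eq_of_le (Int.fract_nonneg (u x)) with h | h
        · exact h
        · exact absurd (hfr.mpr h.symm) (ne_of_gt hfv)
      have h4 : u x = (⌊u x⌋ : ℝ) + Int.fract (u x) := (Int.floor_add_fract _).symm
      rw [← hfl, hfloor] at h4
      linarith

end RegionAux


/-! ### Satisfaction helpers -/

theorem wsat_of_val_none {w : Weight} (h : w.val = none) (d : ℝ) : w.sat d := by
  rcases w with ⟨s, _ | c⟩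
  · simp [Weight.sat]
  · simp at h

theorem wsat_some_le {w : Weight} {c : ℤ} (hv : w.val = some c) {d : ℝ} (h : w.sat d) :
    d ≤ (c : ℝ) := by
  rcases w with ⟨s, _ | c'⟩
  · simp at hv
  · simp only at hv
    injection hv with hv
    subst hv
    cases s <;> simp [Weight.sat] at h <;> linarith

theorem wsat_of_lt {w : Weight} {c : ℤ} (hv : w.val = some c) {d : ℝ} (h : d < (c : ℝ)) :
    w.sat d := by
  rcases w with ⟨s, _ | c'⟩
  · simp at hv
  · simp only at hv
    injection hv with hv
    subst hv
    cases s <;> simp [Weight.sat] <;> linarith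

theorem notsat_flip {w : Weight} {c : ℤ} (hv : w.val = some c) {d : ℝ} (h : ¬ w.sat d) :
    Weight.sat ⟨!w.strict, some (-c)⟩ (-d) := by
  rcases w with ⟨s, _ | c'⟩
  · simp at hv
  · simp only at hv
    injection hv with hv
    subst hv
    cases s <;> simp [Weight.sat] at h ⊢ <;> push_cast <;> linarith

theorem radd_left_comm (a b c : RW) : radd a (radd b c) = radd b (radd a c) := by
  rw [← radd_assoc, radd_comm a b, radd_assoc]

/-! ### The main region-zone lemmas -/

section MainAux

variable {X : Type*} [Fintype X] (α : X → ℕ) (v₀ : Val X) {Z : Set (Val X)}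
  (GR GZ : DGraph X)

theorem sat1 (hRmin : ∀ a b w, Bounds (RSetV α v₀) a b w → (GR a b).le w)
    (hne : ∀ x y : Vtx X, ¬ ((GZ y x).add (GR x y)).le (wlt 0)) (hnn : Nonneg v₀)
    (a b : Vtx X) : ∃ u ∈ RSetV α v₀, (GZ a b).sat (extV u b - extV u a) := by
  by_contra hno
  push_neg at hno
  rcases hv : (GZ a b).val with _ | c
  · exact hno v₀ (v₀_mem_RSetV α v₀ hnn) (wsat_of_val_none hv _)
  · have hb : Bounds (RSetV α v₀) b a ⟨!(GZ a b).strict, some (-c)⟩ := by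
      intro u hu
      have h2 := notsat_flip hv (hno u hu)
      have e : -(extV u b - extV u a) = extV u a - extV u b := by ring
      rwa [e] at h2
    have hflip := hRmin b a _ hb
    have hsum : ((GZ a b).add ⟨!(GZ a b).strict, some (-c)⟩).le (wlt 0) := by
      refine Or.inr ?_
      show (⟨(GZ a b).strict || !(GZ a b).strict, ovAdd (GZ a b).val (some (-c))⟩ : Weight) = wlt 0
      rw [hv]
      simp [ovAdd, wlt]
    exact hne b a (wadd_le_wlt0 hflip hsum)

theorem groundsat (hGZ : IsCanonGraph GZ Z)
    (hRmin : ∀ a b w, Bounds (RSetV α v₀) a b w → (GR a b).le w)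
    (hne : ∀ x y : Vtx X, ¬ ((GZ y x).add (GR x y)).le (wlt 0)) (hnn : Nonneg v₀)
    {a b : Vtx X} (hga : GroundV α v₀ a) (hgb : GroundV α v₀ b) :
    (GZ a b).sat (extV v₀ b - extV v₀ a) := by
  obtain ⟨u, huR, husat⟩ := sat1 α v₀ GR GZ hRmin hne hnn a b
  rcases hv : (GZ a b).val with _ | c
  · exact wsat_of_val_none hv _
  · obtain ⟨N, hcase⟩ := reg_split α v₀ huR hga hgb
    rcases hcase with ⟨h1, h2⟩ | ⟨h1, h2, h3, h4⟩
    · rw [h2, ← h1]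
      exact husat
    · have hNc : ((N : ℝ) + 1) ≤ (c : ℝ) := by
        have hle := wsat_some_le hv husat
        have hNc' : (N : ℝ) < (c : ℝ) := lt_of_lt_of_le h1 hle
        have : N < c := by exact_mod_cast hNc'
        exact_mod_cast this
      exact wsat_of_lt hv (by linarith)

theorem bracket (hGZ : IsCanonGraph GZ Z)
    (hRmin : ∀ a b w, Bounds (RSetV α v₀) a b w → (GR a b).le w)
    (hne : ∀ x y : Vtx X, ¬ ((GZ y x).add (GR x y)).le (wlt 0)) (hnn : Nonneg v₀)
    {q p : Vtx X} (hgq : GroundV α v₀ q) :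
    ¬ rle (radd (ZwV GZ q p) (some (extV v₀ q - hV α v₀ p, flagV α v₀ p))) rwlt0 := by
  by_cases hgp : GroundV α v₀ p
  · have hsatqp := groundsat α v₀ GR GZ hGZ hRmin hne hnn hgq hgp
    have h1 : rsat (ZwV GZ q p) (extV v₀ p - extV v₀ q) := rsat_toRW.mpr hsatqp
    have hh : hV α v₀ p = extV v₀ p := by
      cases p with
      | none => rfl
      | some x => exact if_pos hgp
    have hf : flagV α v₀ p = true := if_pos hgp
    have h2 : rsat (some (extV v₀ q - hV α v₀ p, flagV α v₀ p)) (extV v₀ q - extV v₀ p) := by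
      rw [hh, hf]
      simp [rsat]
    have h3 := rsat_radd h1 h2
    have e : (extV v₀ p - extV v₀ q) + (extV v₀ q - extV v₀ p) = 0 := by ring
    rw [e] at h3
    exact pos_of_rsat_zero h3
  · cases p with
    | none => exact absurd trivial hgp
    | some x =>
      have hx : (α x : ℝ) < v₀ x := not_le.mp hgp
      obtain ⟨m, hmb, hmlt⟩ : ∃ m : ℤ, (∀ u ∈ RSetV α v₀, extV u q ≤ (m : ℝ)) ∧
          (m : ℝ) - 1 < extV v₀ q := by
        obtain ⟨N₀, -, hvq⟩ := reg_decomp α v₀ (v₀_mem_RSetV α v₀ hnn) hgq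
        have hfq0 := frV_nonneg v₀ q
        have hfq1 := frV_lt_one v₀ q
        have hz : ∀ u : Val X, extV u (none : Vtx X) = 0 := fun _ => rfl
        by_cases hf : frV v₀ q = 0
        · refine ⟨N₀, ?_, by rw [hvq, hf]; linarith⟩
          intro u hu
          obtain ⟨N, hcase⟩ := reg_split α v₀ hu (a := none)
            (show GroundV α v₀ none from trivial) hgq
          rcases hcase with ⟨h1, h2⟩ | ⟨h1, h2, h3, h4⟩
          · rw [hz, sub_zero] at h1 h2
            rw [h1, ← h2, hvq, hf]
            linarith
          · exfalso
            rw [hz, sub_zero] at h3 h4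
            rw [hvq, hf, add_zero] at h3 h4
            have c3 : N < N₀ := by exact_mod_cast h3
            have c4 : N₀ < N + 1 := by exact_mod_cast h4
            omega
        · have hfpos : 0 < frV v₀ q := lt_of_le_of_ne hfq0 (Ne.symm hf)
          have hlast : ((N₀ + 1 : ℤ) : ℝ) - 1 < extV v₀ q := by
            rw [hvq]; push_cast; linarith
          refine ⟨N₀ + 1, ?_, hlast⟩
          intro u hu
          obtain ⟨N, hcase⟩ := reg_split α v₀ hu (a := none)
            (show GroundV α v₀ none from trivial) hgq
          rcases hcase with ⟨h1, h2⟩ | ⟨h1, h2, h3, h4⟩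
          · rw [hz, sub_zero] at h1 h2
            rw [h1, ← h2, hvq]
            push_cast
            linarith
          · rw [hz, sub_zero] at h2 h3
            have hNN : N < N₀ + 1 := by
              have : (N : ℝ) < (N₀ : ℝ) + 1 := by rw [hvq] at h3; linarith
              exact_mod_cast this
            have hNN' : (N : ℝ) + 1 ≤ (N₀ : ℝ) + 1 := by exact_mod_cast hNN
            push_cast
            linarith
      have hbZ : Bounds (RSetV α v₀) (some x) q (wlt (m - α x)) := by
        intro u hu
        have h1 := hmb u hu
        have h2 := reg_up α v₀ hu hx
        show Weight.sat ⟨true, some (m - α x)⟩ (extV u q - extV u (some x))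
        have e : extV u (some x) = u x := rfl
        rw [e]
        simp only [Weight.sat, if_true]
        push_cast
        linarith
      have hGRle := hRmin (some x) q _ hbZ
      have hpos : ¬ ((GZ q (some x)).add (wlt (m - α x))).le (wlt 0) := fun hcon =>
        hne (some x) q (wadd_le_wlt0 hGRle hcon)
      rcases hv : (GZ q (some x)).val with _ | c
      · have hzw : ZwV GZ q (some x) = none := by simp [ZwV, toRW, hv]
        rw [hzw, radd_none_left]
        intro hcon; exact hcon
      · have hck : 1 ≤ c + (m - α x) := wadd_wlt_pos' hv hpos
        have hzw : ZwV GZ q (some x) = some ((c : ℝ), !(GZ q (some x)).strict) := by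
          simp [ZwV, toRW, hv]
        rw [hzw]
        have hflag : flagV α v₀ (some x) = false := if_neg hgp
        have hhv : hV α v₀ (some x) = (α x : ℝ) := if_neg hgp
        rw [hflag, hhv]
        intro hcon
        have hcon' : rle (some ((c : ℝ) + (extV v₀ q - (α x : ℝ)), false)) rwlt0 := by
          have e : radd (some ((c : ℝ), !(GZ q (some x)).strict))
              (some (extV v₀ q - (α x : ℝ), false)) =
              some ((c : ℝ) + (extV v₀ q - (α x : ℝ)), (!(GZ q (some x)).strict) && false) := rfl
          rw [e, Bool.and_false] at hcon
          exact hcon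
        have hC : (c : ℝ) + (extV v₀ q - (α x : ℝ)) ≤ 0 := by
          rcases hcon' with h | ⟨h, -⟩
          · linarith [h]
          · linarith [le_of_eq h]
        have h1r : (1 : ℝ) ≤ (c : ℝ) + ((m : ℝ) - (α x : ℝ)) := by exact_mod_cast hck
        linarith

theorem ztriR (hGZ : IsCanonGraph GZ Z) (a c b : Vtx X) :
    rle (ZwV GZ a b) (radd (ZwV GZ a c) (ZwV GZ c b)) := by
  have h := wle_to_rle (ztri hGZ a c b)
  rwa [toRW_add] at h

theorem Ekey (hGZ : IsCanonGraph GZ Z)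
    (hRmin : ∀ a b w, Bounds (RSetV α v₀) a b w → (GR a b).le w)
    (hne : ∀ x y : Vtx X, ¬ ((GZ y x).add (GR x y)).le (wlt 0)) (hnn : Nonneg v₀)
    (x y x' y' : Vtx X) :
    rle (EwV α v₀ x y')
      (radd (EwV α v₀ x y) (radd (ZwV GZ y x') (EwV α v₀ x' y'))) := by
  by_cases hgy : GroundV α v₀ y
  · by_cases hgy' : GroundV α v₀ y'
    · have hbr := bracket α v₀ GR GZ hGZ hRmin hne hnn (q := y) (p := x') hgy
      have hsh := rle_shift hbr (extV v₀ y' - extV v₀ y)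
      have e1 : (extV v₀ y - hV α v₀ x') + (extV v₀ y' - extV v₀ y) =
          extV v₀ y' - hV α v₀ x' := by ring
      rw [e1] at hsh
      have hE1 : EwV α v₀ x y = some (extV v₀ y - hV α v₀ x, flagV α v₀ x) := if_pos hgy
      have hE2 : EwV α v₀ x' y' = some (extV v₀ y' - hV α v₀ x', flagV α v₀ x') := if_pos hgy'
      have hE3 : EwV α v₀ x y' = some (extV v₀ y' - hV α v₀ x, flagV α v₀ x) := if_pos hgy'
      rw [hE1, hE2, hE3]
      have e2 : radd (some (extV v₀ y - hV α v₀ x, flagV α v₀ x))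
          (some (extV v₀ y' - extV v₀ y, true)) =
          some (extV v₀ y' - hV α v₀ x, flagV α v₀ x) := by
        show some ((extV v₀ y - hV α v₀ x) + (extV v₀ y' - extV v₀ y),
          flagV α v₀ x && true) = _
        simp only [Bool.and_true, Option.some.injEq, Prod.mk.injEq]
        exact ⟨by ring, trivial⟩
      rw [← e2]
      exact radd_mono_right _ hsh
    · have h1 : EwV α v₀ x' y' = none := if_neg hgy'
      have h2 : EwV α v₀ x y' = none := if_neg hgy'
      rw [h1, h2, radd_none_right, radd_none_right]
      exact rle_none _
  · have h1 : EwV α v₀ x y = none := if_neg hgy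
    rw [h1, radd_none_left]
    exact rle_none _

theorem hTB (hGZ : IsCanonGraph GZ Z)
    (hRmin : ∀ a b w, Bounds (RSetV α v₀) a b w → (GR a b).le w)
    (hne : ∀ x y : Vtx X, ¬ ((GZ y x).add (GR x y)).le (wlt 0)) (hnn : Nonneg v₀)
    (a c b : Vtx X) :
    rle (BV α v₀ GZ a b) (radd (BV α v₀ GZ a c) (BV α v₀ GZ c b)) := by
  rcases BV_att α v₀ GZ a c with h1 | ⟨p1, h1⟩ <;> rcases BV_att α v₀ GZ c b with h2 | ⟨p2, h2⟩ <;>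
    rw [h1, h2]
  · exact rle_trans (BV_le_Zw α v₀ GZ a b) (ztriR GZ hGZ a c b)
  · refine rle_trans (BV_le_shape α v₀ GZ a b p2) ?_
    have h := radd_mono_left (radd (EwV α v₀ p2.1 p2.2) (ZwV GZ p2.2 b)) (ztriR GZ hGZ a c p2.1)
    rw [radd_assoc] at h
    exact h
  · refine rle_trans (BV_le_shape α v₀ GZ a b p1) ?_
    show rle (radd (ZwV GZ a p1.1) (radd (EwV α v₀ p1.1 p1.2) (ZwV GZ p1.2 b)))
      (radd (radd (ZwV GZ a p1.1) (radd (EwV α v₀ p1.1 p1.2) (ZwV GZ p1.2 c))) (ZwV GZ c b))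
    rw [radd_assoc, radd_assoc]
    exact radd_mono_right _ (radd_mono_right _ (ztriR GZ hGZ p1.2 c b))
  · obtain ⟨x, y⟩ := p1
    obtain ⟨x', y'⟩ := p2
    refine rle_trans (BV_le_shape α v₀ GZ a b (x, y')) ?_
    show rle (radd (ZwV GZ a x) (radd (EwV α v₀ x y') (ZwV GZ y' b)))
      (radd (radd (ZwV GZ a x) (radd (EwV α v₀ x y) (ZwV GZ y c)))
        (radd (ZwV GZ c x') (radd (EwV α v₀ x' y') (ZwV GZ y' b))))
    rw [radd_assoc]
    apply radd_mono_right
    have inner : rle (radd (ZwV GZ y x') (EwV α v₀ x' y'))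
        (radd (ZwV GZ y c) (radd (ZwV GZ c x') (EwV α v₀ x' y'))) := by
      rw [← radd_assoc]
      exact radd_mono_left _ (ztriR GZ hGZ y c x')
    have hbig : rle (EwV α v₀ x y')
        (radd (EwV α v₀ x y) (radd (ZwV GZ y c) (radd (ZwV GZ c x') (EwV α v₀ x' y')))) :=
      rle_trans (Ekey α v₀ GR GZ hGZ hRmin hne hnn x y x' y') (radd_mono_right _ inner)
    have e : radd (radd (EwV α v₀ x y) (ZwV GZ y c))
        (radd (ZwV GZ c x') (radd (EwV α v₀ x' y') (ZwV GZ y' b))) =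
        radd (radd (EwV α v₀ x y) (radd (ZwV GZ y c) (radd (ZwV GZ c x') (EwV α v₀ x' y'))))
          (ZwV GZ y' b) := by
      simp only [radd_assoc]
    rw [e]
    exact radd_mono_left _ hbig

theorem hDB (hGZ : IsCanonGraph GZ Z)
    (hRmin : ∀ a b w, Bounds (RSetV α v₀) a b w → (GR a b).le w)
    (hne : ∀ x y : Vtx X, ¬ ((GZ y x).add (GR x y)).le (wlt 0)) (hnn : Nonneg v₀)
    (a : Vtx X) : ¬ rle (BV α v₀ GZ a a) rwlt0 := by
  intro hcon
  rcases BV_att α v₀ GZ a a with h | ⟨p, h⟩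
  · rw [h] at hcon
    exact zdiag_pos hGZ a hcon
  · rw [h] at hcon
    obtain ⟨x, y⟩ := p
    by_cases hgy : GroundV α v₀ y
    · have hE : EwV α v₀ x y = some (extV v₀ y - hV α v₀ x, flagV α v₀ x) := if_pos hgy
      have h1 : rle (ZwV GZ y x) (radd (ZwV GZ y a) (ZwV GZ a x)) := ztriR GZ hGZ y a x
      have h2 := radd_mono_left (EwV α v₀ x y) h1
      have e : radd (radd (ZwV GZ y a) (ZwV GZ a x)) (EwV α v₀ x y) =
          shapeV α v₀ GZ a a (x, y) := by
        show _ = radd (ZwV GZ a x) (radd (EwV α v₀ x y) (ZwV GZ y a))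
        simp only [radd_assoc, radd_comm, radd_left_comm]
      rw [e] at h2
      have h3 := rle_trans h2 hcon
      rw [hE] at h3
      exact bracket α v₀ GR GZ hGZ hRmin hne hnn hgy h3
    · have hE : EwV α v₀ x y = none := if_neg hgy
      have e : shapeV α v₀ GZ a a (x, y) = none := by
        show radd (ZwV GZ a x) (radd (EwV α v₀ x y) (ZwV GZ y a)) = none
        rw [hE, radd_none_left, radd_none_right]
      rw [e] at hcon
      exact hcon

end MainAux


/-- For a region `R` and a zone `Z` with canonical distance graphs
`GR`, `GZ`: `R ∩ Z = ∅` iff there are vertices `x, y` with `Z_{yx} + R_{xy} ≤ (<,0)`. -/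
theorem stmt1 {X : Type*} [Fintype X] (α : X → ℕ) (R Z : Set (Val X))
    (hR : IsRegion α R) (hZ : IsZone Z)
    (GR GZ : DGraph X) (hGR : IsCanonGraph GR R) (hGZ : IsCanonGraph GZ Z) :
    R ∩ Z = ∅ ↔ ∃ x y : Vtx X, ((GZ y x).add (GR x y)).le (wlt 0) := by
  obtain ⟨v₀, hnn, hRdef⟩ := hR
  have hReq : R = RSetV α v₀ := hRdef
  constructor
  · -- If the intersection is empty, a negative two-edge cycle exists.
    intro hempty
    by_contra hnex
    push_neg at hnex
    have hRmin : ∀ a b w, Bounds (RSetV α v₀) a b w → (GR a b).le w := by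
      rw [← hReq]; exact hGR.2
    have hT := fun a c b => hTB α v₀ GR GZ hGZ hRmin hnex hnn a c b
    have hD := fun a => hDB α v₀ GR GZ hGZ hRmin hnex hnn a
    obtain ⟨f, hf0, hfsat⟩ := feas (V := Vtx X) none (BV α v₀ GZ) hT hD
    set u : Val X := fun x => f (some x) with hudef
    have hext : ∀ a : Vtx X, extV u a = f a := by
      intro a; cases a
      · exact hf0.symm
      · rfl
    have hGZsat : ∀ a b : Vtx X, (GZ a b).sat (extV u b - extV u a) := by
      intro a b
      have h1 := rsat_mono (BV_le_Zw α v₀ GZ a b) (hfsat a b)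
      rw [hext a, hext b]
      exact rsat_toRW.mp h1
    have hnnu : Nonneg u := by
      intro x
      have h1 := rsat_mono (BV_le_Zw α v₀ GZ (some x) none) (hfsat (some x) none)
      have h2 : rle (ZwV GZ (some x) none) (some ((0:ℝ), true)) := by
        have h := wle_to_rle (zxnone hGZ x)
        rwa [toRW_wle0] at h
      have h3 := rsat_some_true (rsat_mono h2 h1)
      rw [hf0] at h3
      show 0 ≤ f (some x)
      linarith
    have hdiag : ∀ a : Vtx X, rle (ZwV GZ a a) (some ((0:ℝ), true)) := by
      intro a
      have h := wle_to_rle (zdiag hGZ a)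
      rwa [toRW_wle0] at h
    have hub : ∀ x : X, v₀ x ≤ (α x : ℝ) → f (some x) ≤ v₀ x := by
      intro x hx
      have hs := rsat_mono (BV_le_shape α v₀ GZ none (some x) (none, some x))
        (hfsat none (some x))
      have hgx : GroundV α v₀ (some x) := hx
      have hE : EwV α v₀ none (some x) =
          some (extV v₀ (some x) - hV α v₀ none, flagV α v₀ none) := if_pos hgx
      have hle : rle (shapeV α v₀ GZ none (some x) (none, some x))
          (radd (some ((0:ℝ), true)) (radd (some (v₀ x - 0, true)) (some ((0:ℝ), true)))) := by
        show rle (radd (ZwV GZ none none)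
          (radd (EwV α v₀ none (some x)) (ZwV GZ (some x) (some x)))) _
        refine radd_mono_both (hdiag none) (radd_mono_both ?_ (hdiag (some x)))
        rw [hE]
        have e3 : flagV α v₀ (none : Vtx X) = true := if_pos trivial
        rw [show extV v₀ (some x) = v₀ x from rfl, show hV α v₀ (none : Vtx X) = 0 from rfl, e3]
        exact rle_refl _
      have h4 := rsat_mono hle hs
      have e : radd (some ((0:ℝ), true)) (radd (some (v₀ x - 0, true)) (some ((0:ℝ), true))) =
          some ((0:ℝ) + ((v₀ x - 0) + 0), true) := rfl
      rw [e] at h4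
      have h5 := rsat_some_true h4
      rw [hf0] at h5
      linarith
    have hlow : ∀ x : X, rsat (some ((0:ℝ) + ((0 - hV α v₀ (some x)) + 0),
        flagV α v₀ (some x))) (f none - f (some x)) := by
      intro x
      have hs := rsat_mono (BV_le_shape α v₀ GZ (some x) none (some x, none))
        (hfsat (some x) none)
      have hE : EwV α v₀ (some x) none =
          some (extV v₀ none - hV α v₀ (some x), flagV α v₀ (some x)) := if_pos trivial
      have hle : rle (shapeV α v₀ GZ (some x) none (some x, none))
          (radd (some ((0:ℝ), true))
            (radd (some (0 - hV α v₀ (some x), flagV α v₀ (some x))) (some ((0:ℝ), true)))) := by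
        show rle (radd (ZwV GZ (some x) (some x))
          (radd (EwV α v₀ (some x) none) (ZwV GZ none none))) _
        refine radd_mono_both (hdiag (some x)) (radd_mono_both ?_ (hdiag none))
        rw [hE, show extV v₀ (none : Vtx X) = 0 from rfl]
        exact rle_refl _
      have h4 := rsat_mono hle hs
      have e : radd (some ((0:ℝ), true))
          (radd (some (0 - hV α v₀ (some x), flagV α v₀ (some x))) (some ((0:ℝ), true))) =
          some ((0:ℝ) + ((0 - hV α v₀ (some x)) + 0), true && (flagV α v₀ (some x) && true)) := rfl
      rw [e] at h4
      simp only [Bool.true_and, Bool.and_true] at h4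
      exact h4
    have hbval : ∀ x : X, v₀ x ≤ (α x : ℝ) → f (some x) = v₀ x := by
      intro x hx
      have h4 := hlow x
      have hgx : GroundV α v₀ (some x) := hx
      rw [show hV α v₀ (some x) = v₀ x from if_pos hx,
        show flagV α v₀ (some x) = true from if_pos hgx] at h4
      have h5 := rsat_some_true h4
      rw [hf0] at h5
      exact le_antisymm (hub x hx) (by linarith)
    have huval : ∀ x : X, ¬ (v₀ x ≤ (α x : ℝ)) → (α x : ℝ) < f (some x) := by
      intro x hx
      have h4 := hlow x
      have hgx : ¬ GroundV α v₀ (some x) := hx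
      rw [show hV α v₀ (some x) = (α x : ℝ) from if_neg hx,
        show flagV α v₀ (some x) = false from if_neg hgx] at h4
      have h5 := rsat_some_false h4
      rw [hf0] at h5
      linarith
    have huR : u ∈ R := by
      rw [hReq]
      refine ⟨hnnu, ?_, ?_⟩
      · intro x
        by_cases hx : v₀ x ≤ (α x : ℝ)
        · refine Or.inr ⟨?_, ?_⟩
          · rw [show u x = v₀ x from hbval x hx]
          · rw [show u x = v₀ x from hbval x hx]
        · exact Or.inl ⟨not_le.mp hx, huval x hx⟩
      · intro x y hx hy
        rw [show u x = v₀ x from hbval x hx, show u y = v₀ y from hbval y hy]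
    have huZ : u ∈ Z := by
      rw [← hGZ.1]
      exact ⟨hnnu, hGZsat⟩
    rw [Set.eq_empty_iff_forall_notMem] at hempty
    exact hempty u ⟨huR, huZ⟩
  · -- A negative two-edge cycle makes the intersection empty.
    rintro ⟨x, y, hxy⟩
    rw [Set.eq_empty_iff_forall_notMem]
    rintro v ⟨hvR, hvZ⟩
    have h1 : (GZ y x).sat (extV v x - extV v y) := by
      rw [← hGZ.1] at hvZ
      exact hvZ.2 y x
    have h2 : (GR x y).sat (extV v y - extV v x) := by
      rw [← hGR.1] at hvR
      exact hvR.2 x y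
    have h3 := wsat_add h1 h2
    have e : (extV v x - extV v y) + (extV v y - extV v x) = 0 := by ring
    rw [e] at h3
    exact wsat_wlt0_false hxy h3


end TAform

end
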